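/- For every integer k ≥ 2, with p_k = 2^{1-k}, G(x) = (1/2)(1 - (1/2)(1-Φ(x^{-1/2}))/(1-Φ(√2))), one has p_k·G((k²+k+1)/(2k+1)²) + (1-p_k)·G((k²+k-1)/(2k+1)²) ≥ G(1/4). -/

import Mathlib

open Real

/-- The standard normal cumulative distribution function. -/
noncomputable def normalCDF (x : ℝ) : ℝ :=
  ∫ t in Set.Iic x, (Real.sqrt (2 * Real.pi))⁻¹ * Real.exp (-t ^ 2 / 2)

/-- The standard normal density. -/
noncomputable def normalPDF (x : ℝ) : ℝ :=
  (Real.sqrt (2 * Real.pi))⁻¹ * Real.exp (-x ^ 2 / 2)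

/-- The function G from the paper. -/
noncomputable def G (x : ℝ) : ℝ :=
  (1/2) * (1 - (1/2) * (1 - normalCDF ((Real.sqrt x)⁻¹)) / (1 - normalCDF (Real.sqrt 2)))

open MeasureTheory

lemma normalPDF_pos (x : ℝ) : 0 < normalPDF x := by
  unfold normalPDF
  positivity

lemma normalPDF_eq : normalPDF = fun x => (Real.sqrt (2*Real.pi))⁻¹ * Real.exp (-(1/2) * x^2) := by
  funext x; unfold normalPDF; ring_nf

lemma integrable_normalPDF : Integrable normalPDF := by
  rw [normalPDF_eq]
  exact (integrable_exp_neg_mul_sq (by norm_num)).const_mul _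

lemma normalCDF_eq (x : ℝ) : normalCDF x = ∫ t in Set.Iic x, normalPDF t := rfl

lemma normalCDF_sub {y x : ℝ} (h : y ≤ x) :
    normalCDF x - normalCDF y = ∫ t in Set.Ioc y x, normalPDF t := by
  rw [normalCDF_eq, normalCDF_eq,
    intervalIntegral.integral_Iic_sub_Iic integrable_normalPDF.integrableOn
      integrable_normalPDF.integrableOn,
    intervalIntegral.integral_of_le h]

lemma normalPDF_anti {y x : ℝ} (h0 : 0 ≤ y) (h : y ≤ x) : normalPDF x ≤ normalPDF y := by
  unfold normalPDF
  apply mul_le_mul_of_nonneg_left _ (by positivity)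
  apply Real.exp_le_exp.mpr
  nlinarith

lemma cdf_diff_le {y x : ℝ} (h0 : 0 ≤ y) (h : y ≤ x) :
    normalCDF x - normalCDF y ≤ (x - y) * normalPDF y := by
  rw [normalCDF_sub h]
  calc ∫ t in Set.Ioc y x, normalPDF t ≤ ∫ _t in Set.Ioc y x, normalPDF y := by
        apply setIntegral_mono_on integrable_normalPDF.integrableOn
          (integrableOn_const measure_Ioc_lt_top.ne) measurableSet_Ioc
        intro t ht
        exact normalPDF_anti h0 ht.1.le
    _ = (x - y) * normalPDF y := by
        rw [setIntegral_const, Real.volume_real_Ioc_of_le h, smul_eq_mul]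

lemma cdf_diff_ge {y x : ℝ} (h0 : 0 ≤ y) (h : y ≤ x) :
    (x - y) * normalPDF x ≤ normalCDF x - normalCDF y := by
  rw [normalCDF_sub h]
  calc (x - y) * normalPDF x = ∫ _t in Set.Ioc y x, normalPDF x := by
        rw [setIntegral_const, Real.volume_real_Ioc_of_le h, smul_eq_mul]
    _ ≤ ∫ t in Set.Ioc y x, normalPDF t := by
        apply setIntegral_mono_on
          (integrableOn_const measure_Ioc_lt_top.ne)
          integrable_normalPDF.integrableOn measurableSet_Ioc
        intro t ht
        exact normalPDF_anti (le_trans h0 ht.1.le) ht.2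

lemma integral_normalPDF : ∫ x, normalPDF x = 1 := by
  rw [normalPDF_eq, MeasureTheory.integral_const_mul, integral_gaussian]
  rw [show Real.pi / (1/2) = 2 * Real.pi by ring]
  rw [inv_mul_cancel₀ (by positivity)]

lemma normalCDF_lt_one {x : ℝ} (hx : 0 ≤ x) : normalCDF x < 1 := by
  have hsplit : normalCDF x + ∫ t in Set.Ioi x, normalPDF t = 1 := by
    rw [normalCDF_eq, intervalIntegral.integral_Iic_add_Ioi
      integrable_normalPDF.integrableOn integrable_normalPDF.integrableOn,
      integral_normalPDF]
  have h1 : (x + 1 - x) * normalPDF (x + 1) ≤ normalCDF (x+1) - normalCDF x :=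
    cdf_diff_ge hx (by linarith)
  have h2 : normalCDF (x+1) - normalCDF x ≤ ∫ t in Set.Ioi x, normalPDF t := by
    rw [normalCDF_sub (by linarith : x ≤ x + 1)]
    apply setIntegral_mono_set integrable_normalPDF.integrableOn
      (Filter.Eventually.of_forall fun t => (normalPDF_pos t).le)
    exact Filter.Eventually.of_forall (Set.Ioc_subset_Ioi_self)
  have := normalPDF_pos (x+1)
  nlinarith

lemma reduction {α β p a b : ℝ} (h0 : 0 < α) (hα : α ≤ 2) (hβ : 2 ≤ β)
    (hp : 0 ≤ p) (hp1 : p ≤ 1)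
    (hkey : p * ((2 - α) * normalPDF α) ≤ (1 - p) * ((β - 2) * normalPDF β))
    (hA : (Real.sqrt a)⁻¹ = α) (hB : (Real.sqrt b)⁻¹ = β) :
    p * G a + (1 - p) * G b ≥ G (1/4) := by
  have hQ : (Real.sqrt (1/4 : ℝ))⁻¹ = 2 := by
    rw [show (1/4:ℝ) = (1/2)^2 by norm_num, Real.sqrt_sq (by norm_num)]
    norm_num
  have hD : 0 < 1 - normalCDF (Real.sqrt 2) := by
    have := normalCDF_lt_one (Real.sqrt_nonneg 2)
    linarith
  have h1 : normalCDF 2 - normalCDF α ≤ (2 - α) * normalPDF α := cdf_diff_le h0.le hα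
  have h2 : (β - 2) * normalPDF β ≤ normalCDF β - normalCDF 2 := cdf_diff_ge (by norm_num) hβ
  have h3 : p * (normalCDF 2 - normalCDF α) ≤ (1 - p) * (normalCDF β - normalCDF 2) := by
    calc p * (normalCDF 2 - normalCDF α) ≤ p * ((2 - α) * normalPDF α) :=
          mul_le_mul_of_nonneg_left h1 hp
      _ ≤ (1 - p) * ((β - 2) * normalPDF β) := hkey
      _ ≤ (1 - p) * (normalCDF β - normalCDF 2) :=
          mul_le_mul_of_nonneg_left h2 (by linarith)
  unfold G
  rw [hA, hB, hQ, ge_iff_le, ← sub_nonneg]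
  have heq : p * (1/2 * (1 - 1/2 * (1 - normalCDF α) / (1 - normalCDF (Real.sqrt 2)))) +
      (1 - p) * (1/2 * (1 - 1/2 * (1 - normalCDF β) / (1 - normalCDF (Real.sqrt 2)))) -
      1/2 * (1 - 1/2 * (1 - normalCDF 2) / (1 - normalCDF (Real.sqrt 2))) =
      (p * normalCDF α + (1 - p) * normalCDF β - normalCDF 2) *
        (4 * (1 - normalCDF (Real.sqrt 2)))⁻¹ := by
    field_simp
    ring
  rw [heq]
  apply mul_nonneg (by nlinarith) (by positivity)

lemma key2 : (2 - 5 / Real.sqrt 7) * Real.exp (5/7) ≤ Real.sqrt 5 - 2 := by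
  have h1 : (51/56:ℝ) ≤ Real.exp (-(5/56)) := by
    have := Real.add_one_le_exp (-(5/56:ℝ)); linarith
  have h2 : ((51:ℝ)/56)^8 ≤ Real.exp (-(5/7)) := by
    calc ((51:ℝ)/56)^8 ≤ (Real.exp (-(5/56)))^8 := by
          apply pow_le_pow_left₀ (by norm_num) h1
      _ = Real.exp (-(5/7)) := by
          rw [← Real.exp_nat_mul]; norm_num
  have h7 : Real.sqrt 7 ≤ 2.6457514 := by
    calc Real.sqrt 7 ≤ Real.sqrt (2.6457514^2) := Real.sqrt_le_sqrt (by norm_num)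
      _ = 2.6457514 := Real.sqrt_sq (by norm_num)
  have h7p : (0:ℝ) < Real.sqrt 7 := Real.sqrt_pos.mpr (by norm_num)
  have h5 : (2.2360:ℝ) ≤ Real.sqrt 5 := by
    calc (2.2360:ℝ) = Real.sqrt (2.2360^2) := (Real.sqrt_sq (by norm_num)).symm
      _ ≤ Real.sqrt 5 := Real.sqrt_le_sqrt (by norm_num)
  have step : 2 - 5 / Real.sqrt 7 ≤ (Real.sqrt 5 - 2) * Real.exp (-(5/7)) := by
    have e1 : 2 - 5 / Real.sqrt 7 ≤ 2 - 5 / 2.6457514 := by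
      have : (5:ℝ) / 2.6457514 ≤ 5 / Real.sqrt 7 := by
        apply div_le_div_of_nonneg_left (by norm_num) h7p h7
      linarith
    have e2 : ((2.2360:ℝ) - 2) * ((51/56:ℝ)^8) ≤ (Real.sqrt 5 - 2) * Real.exp (-(5/7)) := by
      apply mul_le_mul (by linarith) h2 (by positivity) (by linarith)
    have e3 : (2:ℝ) - 5 / 2.6457514 ≤ ((2.2360:ℝ) - 2) * ((51/56:ℝ)^8) := by norm_num
    linarith
  have hep : (0:ℝ) < Real.exp (5/7) := Real.exp_pos _
  have hmul : Real.exp (-(5/7)) * Real.exp (5/7) = 1 := by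
    rw [← Real.exp_add]; norm_num
  nlinarith [step, mul_le_mul_of_nonneg_right step hep.le]

lemma key3 {p S T e : ℝ} (hp : 0 < p) (hp4 : p ≤ 1/4) (hT : 0 < T) (hTS : T ≤ S)
    (he : e ≤ 5) : p * (3/S) * e ≤ (1-p) * (5/T) := by
  have hS : 0 < S := lt_of_lt_of_le hT hTS
  rw [show p*(3/S)*e = (p*3*e)/S from by ring, show (1-p)*(5/T) = ((1-p)*5)/T from by ring,
    div_le_div_iff₀ hS hT]
  nlinarith [mul_nonneg (mul_nonneg hp.le hT.le) (sub_nonneg.mpr he),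
    mul_nonneg hp.le (sub_nonneg.mpr hTS),
    mul_nonneg (sub_nonneg.mpr hp4) hS.le]

lemma le_two_aux {K x : ℝ} (hK : 2 ≤ K) (h : x^2*(K^2+K+1) = (2*K+1)^2) (hx : 0 < x) :
    x ≤ 2 := by
  have h2 : (0:ℝ) < K^2+K+1 := by nlinarith
  have hx4 : x^2*(K^2+K+1) < 4*(K^2+K+1) := by nlinarith [h]
  have hxx : x^2 < 4 := lt_of_mul_lt_mul_right hx4 h2.le
  nlinarith [hxx, hx]

lemma two_le_aux {K x : ℝ} (hK : 2 ≤ K) (h : x^2*(K^2+K-1) = (2*K+1)^2) (hx : 0 < x) :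
    2 ≤ x := by
  have h1 : (0:ℝ) < K^2+K-1 := by nlinarith
  have hx4 : 4*(K^2+K-1) < x^2*(K^2+K-1) := by nlinarith [h]
  have hxx : 4 < x^2 := lt_of_mul_lt_mul_right hx4 h1.le
  nlinarith [hxx, hx]

lemma poly_aux {K : ℝ} (hK3 : 3 ≤ K) : 2*(2*K+1)^2 ≤ 8/5*((K^2+K-1)*(K^2+K+1)) := by
  have hu : (12:ℝ) ≤ K^2+K := by nlinarith
  nlinarith [sq_nonneg (K^2+K-12)]

lemma exp_le_aux {d : ℝ} (hd : d ≤ 4/5) : Real.exp d ≤ 5 := by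
  have hx := Real.add_one_le_exp (-d)
  have hmul : Real.exp (-d) * Real.exp d = 1 := by rw [← Real.exp_add]; simp
  nlinarith [Real.exp_pos d, Real.exp_pos (-d)]

lemma TS_aux {a b c : ℝ} (h : b ≤ a) (hb : 0 < b) (hc : 0 < c) :
    b*(2*b+c) ≤ a*(2*a+c) := by nlinarith

lemma main_aux (K p : ℝ) (hK : 2 ≤ K) (hp : 0 < p) (hp2 : p ≤ 1/2)
    (hcase : (K = 2 ∧ p = 1/2) ∨ (3 ≤ K ∧ p ≤ 1/4)) :
    p * G ((K^2+K+1)/(2*K+1)^2) + (1-p) * G ((K^2+K-1)/(2*K+1)^2) ≥ G (1/4) := by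
  have h1 : (0:ℝ) < K^2+K-1 := by nlinarith
  have h2 : (0:ℝ) < K^2+K+1 := by nlinarith
  have hKp : (0:ℝ) < 2*K+1 := by linarith
  obtain ⟨s, hs0, hs2, hsval⟩ : ∃ s:ℝ, 0 < s ∧ s^2 = K^2+K+1 ∧ s = Real.sqrt (K^2+K+1) :=
    ⟨Real.sqrt (K^2+K+1), Real.sqrt_pos.mpr h2, Real.sq_sqrt h2.le, rfl⟩
  obtain ⟨t, ht0, ht2, htval⟩ : ∃ t:ℝ, 0 < t ∧ t^2 = K^2+K-1 ∧ t = Real.sqrt (K^2+K-1) :=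
    ⟨Real.sqrt (K^2+K-1), Real.sqrt_pos.mpr h1, Real.sq_sqrt h1.le, rfl⟩
  have hts : t ≤ s := by nlinarith
  have hA : (Real.sqrt ((K^2+K+1)/(2*K+1)^2))⁻¹ = (2*K+1)/s := by
    rw [Real.sqrt_div h2.le, Real.sqrt_sq hKp.le, ← hsval, inv_div]
  have hB : (Real.sqrt ((K^2+K-1)/(2*K+1)^2))⁻¹ = (2*K+1)/t := by
    rw [Real.sqrt_div h1.le, Real.sqrt_sq hKp.le, ← htval, inv_div]
  have hα0 : 0 < (2*K+1)/s := by positivity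
  have hαs : (2*K+1)/s * s = 2*K+1 := by field_simp
  have hβt : (2*K+1)/t * t = 2*K+1 := by field_simp
  have hα2' : ((2*K+1)/s)^2 * (K^2+K+1) = (2*K+1)^2 := by
    linear_combination ((2*K+1)/s*s+(2*K+1))*hαs - ((2*K+1)/s)^2*hs2
  have hβ2' : ((2*K+1)/t)^2 * (K^2+K-1) = (2*K+1)^2 := by
    linear_combination ((2*K+1)/t*t+(2*K+1))*hβt - ((2*K+1)/t)^2*ht2
  have hαle : (2*K+1)/s ≤ 2 := le_two_aux hK hα2' hα0
  have hβge : 2 ≤ (2*K+1)/t := two_le_aux hK hβ2' (by positivity)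
  have hS0 : 0 < s*(2*s+(2*K+1)) := by positivity
  have hT0 : 0 < t*(2*t+(2*K+1)) := by positivity
  have h2α : 2 - (2*K+1)/s = 3/(s*(2*s+(2*K+1))) := by
    rw [eq_div_iff (ne_of_gt hS0)]
    linear_combination 4*hs2 - (2*s+2*K+1)*hαs
  have hβ2eq : (2*K+1)/t - 2 = 5/(t*(2*t+(2*K+1))) := by
    rw [eq_div_iff (ne_of_gt hT0)]
    linear_combination (2*t+2*K+1)*hβt - 4*ht2
  have hTS : t*(2*t+(2*K+1)) ≤ s*(2*s+(2*K+1)) := TS_aux hts ht0 hKp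
  set α := (2*K+1)/s with hαdef
  set β := (2*K+1)/t with hβdef
  have hkey : p * ((2 - α) * normalPDF α) ≤ (1 - p) * ((β - 2) * normalPDF β) := by
    have hee : Real.exp ((β^2-α^2)/2) * Real.exp (-β^2/2) = Real.exp (-α^2/2) := by
      rw [← Real.exp_add]; congr 1; ring
    have hsuf : p * (2-α) * Real.exp ((β^2-α^2)/2) ≤ (1-p) * (β-2) := by
      rcases hcase with ⟨hK2, hp2'⟩ | ⟨hK3, hp4⟩
      · subst hK2
        have hs7 : s = Real.sqrt 7 := by rw [hsval]; norm_num
        have ht5 : t = Real.sqrt 5 := by rw [htval]; norm_num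
        have hβ5 : β = Real.sqrt 5 := by
          rw [hβdef, ht5, div_eq_iff (by positivity : (0:ℝ) < Real.sqrt 5).ne',
            Real.mul_self_sqrt (by norm_num : (0:ℝ) ≤ 5)]
          norm_num
        have hαval : α = 5/Real.sqrt 7 := by rw [hαdef, hs7]; norm_num
        norm_num at hα2' hβ2'
        have hd : (β^2-α^2)/2 = 5/7 := by linarith [hα2', hβ2']
        rw [hd, hp2', hαval, hβ5]
        linarith [key2]
      · have hprod : (β^2 - α^2) * ((K^2+K-1)*(K^2+K+1)) = 2*(2*K+1)^2 := by
          linear_combination (K^2+K+1)*hβ2' - (K^2+K-1)*hα2'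
        have hP : (0:ℝ) < (K^2+K-1)*(K^2+K+1) := mul_pos h1 h2
        have hβα : β^2 - α^2 ≤ 8/5 := by
          have h8 : (β^2 - α^2) * ((K^2+K-1)*(K^2+K+1)) ≤ 8/5 * ((K^2+K-1)*(K^2+K+1)) := by
            rw [hprod]; exact poly_aux hK3
          exact le_of_mul_le_mul_right h8 hP
        have he5 : Real.exp ((β^2-α^2)/2) ≤ 5 := exp_le_aux (by linarith)
        rw [h2α, hβ2eq]
        exact key3 hp hp4 hT0 hTS he5
    calc p * ((2-α) * normalPDF α)
        = (p*(2-α)*Real.exp ((β^2-α^2)/2)) * ((Real.sqrt (2*Real.pi))⁻¹ * Real.exp (-β^2/2)) := by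
          unfold normalPDF; rw [← hee]; ring
      _ ≤ ((1-p)*(β-2)) * ((Real.sqrt (2*Real.pi))⁻¹ * Real.exp (-β^2/2)) := by
          apply mul_le_mul_of_nonneg_right hsuf (by positivity)
      _ = (1-p) * ((β-2) * normalPDF β) := by unfold normalPDF; ring
  exact reduction hα0 hαle hβge hp.le (by linarith) hkey hA hB

theorem stmt_9 (k : ℕ) (hk : 2 ≤ k) :
    (2 : ℝ) ^ (1 - (k : ℤ)) * G (((k : ℝ) ^ 2 + k + 1) / (2 * (k : ℝ) + 1) ^ 2) +
      (1 - (2 : ℝ) ^ (1 - (k : ℤ))) * G (((k : ℝ) ^ 2 + k - 1) / (2 * (k : ℝ) + 1) ^ 2) ≥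
      G (1/4) := by
  have hK : (2:ℝ) ≤ (k:ℝ) := by exact_mod_cast hk
  have hp : (0:ℝ) < 2^(1-(k:ℤ)) := zpow_pos (by norm_num) _
  have hp2 : (2:ℝ)^(1-(k:ℤ)) ≤ 1/2 := by
    calc (2:ℝ)^(1-(k:ℤ)) ≤ 2^(-1:ℤ) :=
          zpow_le_zpow_right₀ (by norm_num) (by omega)
      _ = 1/2 := by norm_num
  have hcase : ((k:ℝ) = 2 ∧ (2:ℝ)^(1-(k:ℤ)) = 1/2) ∨
      (3 ≤ (k:ℝ) ∧ (2:ℝ)^(1-(k:ℤ)) ≤ 1/4) := by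
    rcases eq_or_lt_of_le hk with h | h
    · left
      subst h
      norm_num
    · right
      have hk3 : 3 ≤ k := h
      refine ⟨by exact_mod_cast hk3, ?_⟩
      calc (2:ℝ)^(1-(k:ℤ)) ≤ 2^(-2:ℤ) :=
            zpow_le_zpow_right₀ (by norm_num) (by omega)
        _ = 1/4 := by norm_num
  exact main_aux (k:ℝ) ((2:ℝ)^(1-(k:ℤ))) hK hp hp2 hcase
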